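/- With the same construction as the reduction from s-t reachability: if there is a directed path from s to t in G of length at most m, then there is a T-tiling of the (m + 2) × 1 rectangle whose first tile is the seed tile (up = white, down = s). -/

import Mathlib

structure Tile (C : Type) where
  left : C
  up : C
  right : C
  down : C
deriving DecidableEq

/-- A `T`-tiling of the `H × W` rectangle: all tiles are from `T`, the borders are
white on all four sides, and adjacent tiles match horizontally and vertically. -/
def IsTiling {C : Type} (white : C) (T : Finset (Tile C)) (H W : ℕ)
    (τ : Fin H → Fin W → Tile C) : Prop :=
  (∀ i j, τ i j ∈ T) ∧
  (∀ i j, j.val = 0 → (τ i j).left = white) ∧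
  (∀ i j, j.val = W - 1 → (τ i j).right = white) ∧
  (∀ i j, i.val = 0 → (τ i j).up = white) ∧
  (∀ i j, i.val = H - 1 → (τ i j).down = white) ∧
  (∀ (i : Fin H) (j : Fin W) (h : j.val + 1 < W),
      (τ i j).right = (τ i ⟨j.val + 1, h⟩).left) ∧
  (∀ (i : Fin H) (j : Fin W) (h : i.val + 1 < H),
      (τ i j).down = (τ ⟨i.val + 1, h⟩ j).up)

/-- A `T`-tiling of the `h × 1` rectangle (a single column): left/right colors of all
tiles are white, top of the first and bottom of the last tile are white, and
consecutive tiles match vertically. -/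
def IsColTiling {C : Type} (white : C) (T : Finset (Tile C)) (h : ℕ)
    (τ : Fin h → Tile C) : Prop :=
  (∀ i, τ i ∈ T) ∧
  (∀ i : Fin h, i.val = 0 → (τ i).up = white) ∧
  (∀ i : Fin h, i.val = h - 1 → (τ i).down = white) ∧
  (∀ i, (τ i).left = white) ∧
  (∀ i, (τ i).right = white) ∧
  (∀ (i : Fin h) (hlt : i.val + 1 < h), (τ i).down = (τ ⟨i.val + 1, hlt⟩).up)

/-- A deterministic set of tile types: there is a partition of the colors
`C = Col ⊔ Colᶜ` with `white ∈ Col` such that tops and bottoms of tiles lie on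
opposite sides, and a tile is determined by its (left,up) colors when its left
color is in `Col`, and by its (right,up) colors when its right color is in `Colᶜ`. -/
def Deterministic {C : Type} (white : C) (T : Finset (Tile C)) : Prop :=
  ∃ Col : Set C, white ∈ Col ∧
    (∀ t ∈ T, (t.up ∈ Col ↔ t.down ∉ Col)) ∧
    (∀ c ∈ Col, ∀ c' : C, ∀ t ∈ T, ∀ t' ∈ T,
       t.left = c → t.up = c' → t'.left = c → t'.up = c' → t = t') ∧
    (∀ c ∉ Col, ∀ c' : C, ∀ t ∈ T, ∀ t' ∈ T,
       t.right = c → t.up = c' → t'.right = c → t'.up = c' → t = t')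

/-- Tile types for the reduction from s-t reachability: colors are `Option V`
with `none` playing the role of white. -/
def reachTiles {V : Type} [Fintype V] [DecidableEq V]
    (E : V → V → Prop) [DecidableRel E] (s t : V) : Finset (Tile (Option V)) :=
  ({⟨none, none, none, some s⟩, ⟨none, some s, none, some s⟩,
    ⟨none, some t, none, none⟩} : Finset (Tile (Option V))) ∪
  Finset.image (fun p : V × V => ⟨none, some p.1, none, some p.2⟩)
    (Finset.univ.filter fun p : V × V => E p.1 p.2)

/-- A path of length at most m from s to t yields a tiling of the (m+2) × 1
rectangle whose first tile is the seed (up = white, down = s). -/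
theorem path_to_colTiling {V : Type} [Fintype V] [DecidableEq V]
    (E : V → V → Prop) [DecidableRel E] (s t : V) (m : ℕ)
    (hpath : ∃ k ≤ m, ∃ v : ℕ → V, v 0 = s ∧ v k = t ∧ ∀ i < k, E (v i) (v (i + 1))) :
    ∃ τ : Fin (m + 2) → Tile (Option V),
      IsColTiling none (reachTiles E s t) (m + 2) τ ∧
      τ ⟨0, by omega⟩ = ⟨none, none, none, some s⟩ := by
  obtain ⟨k, hk, v, hv0, hvk, hE⟩ := hpath
  set w : ℕ → V := fun j => v (j - (m - k)) with hw
  have hws : ∀ j, j ≤ m - k → w j = s := by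
    intro j hj
    simp [hw, Nat.sub_eq_zero_of_le hj, hv0]
  have hwm : w m = t := by
    simp [hw, Nat.sub_sub_self hk, hvk]
  refine ⟨fun i => if i.val = 0 then ⟨none, none, none, some s⟩
    else if i.val = m + 1 then ⟨none, some t, none, none⟩
    else ⟨none, some (w (i.val - 1)), none, some (w i.val)⟩,
    ⟨?_, ?_, ?_, ?_, ?_, ?_⟩, by simp⟩
  · intro i
    by_cases h0 : i.val = 0
    · simp [h0, reachTiles]
    by_cases h1 : i.val = m + 1
    · simp [h0, h1, reachTiles]
    · simp only [h0, h1, if_false]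
      have hi1 : 1 ≤ i.val := Nat.one_le_iff_ne_zero.mpr h0
      have him : i.val ≤ m := by have := i.isLt; omega
      by_cases hc : i.val ≤ m - k
      · rw [hws _ hc, hws _ (by omega)]
        simp [reachTiles]
      · push_neg at hc
        have h1' : w (i.val - 1) = v (i.val - 1 - (m - k)) := rfl
        have h2 : w i.val = v (i.val - 1 - (m - k) + 1) := by
          simp only [hw]; congr 1; omega
        have hlt : i.val - 1 - (m - k) < k := by omega
        rw [h1', h2]
        simp only [reachTiles, Finset.mem_union, Finset.mem_image,
          Finset.mem_filter, Finset.mem_univ, true_and]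
        right
        exact ⟨(v (i.val - 1 - (m - k)), v (i.val - 1 - (m - k) + 1)),
          hE _ hlt, rfl⟩
  · intro i hi; simp [hi]
  · intro i hi
    have : i.val ≠ 0 := by omega
    simp [hi, this]
  · intro i
    by_cases h0 : i.val = 0
    · simp [h0]
    by_cases h1 : i.val = m + 1 <;> simp [h0, h1]
  · intro i
    by_cases h0 : i.val = 0
    · simp [h0]
    by_cases h1 : i.val = m + 1 <;> simp [h0, h1]
  · intro i hlt
    by_cases h0 : i.val = 0
    · by_cases h1 : i.val + 1 = m + 1
      · have hm0 : m = 0 := by omega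
        have hk0 : k = 0 := by omega
        have hst : s = t := by rw [← hv0, ← hvk, hk0]
        simp [h0, h1, hm0, hst]
      · have : w 0 = s := hws 0 (by omega)
        have hm : m ≠ 0 := by omega
        simp [h0, h1, hm, this]
    · have h1 : i.val + 1 ≠ 0 := by omega
      have h2 : i.val ≠ m + 1 := by omega
      by_cases h3 : i.val + 1 = m + 1
      · have : w i.val = t := by rw [show i.val = m by omega, hwm]
        simp [h0, h1, h2, h3, this]
      · simp [h0, h1, h2, h3, show i.val ≠ m by omega]
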